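/- arXiv:2202.12802 — 3 statements merged into one kernel-verified Lean document; each statement's English description precedes it below -/
import Mathlib

section
/- Let 𝔸 be a finite nonempty set (the set of all possible assignments) and p : 𝔸 → ℝ a function with p(A) > 0 for all A ∈ 𝔸. Let 𝔸₍ₖⱼ₎ ⊆ 𝔸 be any subset (the assignments pairing measurement k with landmark j) and let Ā ⊆ 𝔸 be a nonempty subset (the K likeliest assignments). Define the true marginal probability w = (Σ_{A ∈ 𝔸₍ₖⱼ₎} p(A)) / (Σ_{A ∈ 𝔸} p(A)) and the approximate marginal probability w̄ = (Σ_{A ∈ Ā ∩ 𝔸₍ₖⱼ₎} p(A)) / (Σ_{A ∈ Ā} p(A)). Let β ∈ ℝ satisfy β ≥ Σ_{A ∈ 𝔸 \ Ā} p(A), and define the association error bound γ = β / (β + Σ_{A ∈ Ā} p(A)). Then w ∈ [w̄ − γ, w̄ + γ], i.e. |w − w̄| ≤ γ. -/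
/-- Theorem 1 of the paper: the marginal assignment probability error bound.
Given a finite nonempty set of assignments `𝔸` with positive weights `p`, a subset
`Akj` (assignments pairing measurement k with landmark j), a nonempty subset `Abar`
(the K likeliest assignments), and a bound `β` on the unenumerated probability mass,
the true marginal `w` lies within `γ = β / (β + ∑ A ∈ Abar, p A)` of the
approximate marginal `wbar`. -/
theorem marginal_assignment_probability_error_bound
    {α : Type*} [DecidableEq α]
    (𝔸 : Finset α) (h𝔸 : 𝔸.Nonempty)
    (p : α → ℝ) (hp : ∀ A ∈ 𝔸, 0 < p A)
    (Akj : Finset α) (hAkj : Akj ⊆ 𝔸)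
    (Abar : Finset α) (hAbar : Abar ⊆ 𝔸) (hAbarNe : Abar.Nonempty)
    (β : ℝ) (hβ : β ≥ ∑ A ∈ 𝔸 \ Abar, p A)
    (w wbar γ : ℝ)
    (hw : w = (∑ A ∈ Akj, p A) / (∑ A ∈ 𝔸, p A))
    (hwbar : wbar = (∑ A ∈ Abar ∩ Akj, p A) / (∑ A ∈ Abar, p A))
    (hγ : γ = β / (β + ∑ A ∈ Abar, p A)) :
    w ∈ Set.Icc (wbar - γ) (wbar + γ) := by
  have hT : ∑ A ∈ 𝔸, p A = (∑ A ∈ 𝔸 \ Abar, p A) + ∑ A ∈ Abar, p A :=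
    (Finset.sum_sdiff hAbar).symm
  have hAk : ∑ A ∈ Akj, p A = (∑ A ∈ Abar ∩ Akj, p A) + ∑ A ∈ Akj \ Abar, p A := by
    rw [Finset.inter_comm, Finset.sum_inter_add_sum_sdiff]
  set S := ∑ A ∈ Abar, p A with hS
  set R := ∑ A ∈ 𝔸 \ Abar, p A with hR
  set a := ∑ A ∈ Abar ∩ Akj, p A with ha
  set b := ∑ A ∈ Akj \ Abar, p A with hb
  have hSpos : 0 < S :=
    Finset.sum_pos (fun A hA => hp A (hAbar hA)) hAbarNe
  have hRnn : 0 ≤ R :=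
    Finset.sum_nonneg fun A hA => (hp A (Finset.mem_sdiff.1 hA).1).le
  have hann : 0 ≤ a :=
    Finset.sum_nonneg fun A hA => (hp A (hAbar (Finset.mem_inter.1 hA).1)).le
  have haS : a ≤ S :=
    Finset.sum_le_sum_of_subset_of_nonneg Finset.inter_subset_left
      (fun A hA _ => (hp A (hAbar hA)).le)
  have hbnn : 0 ≤ b :=
    Finset.sum_nonneg fun A hA => (hp A (hAkj (Finset.mem_sdiff.1 hA).1)).le
  have hbR : b ≤ R := by
    apply Finset.sum_le_sum_of_subset_of_nonneg
    · intro A hA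
      rcases Finset.mem_sdiff.1 hA with ⟨h1, h2⟩
      exact Finset.mem_sdiff.2 ⟨hAkj h1, h2⟩
    · intro A hA _
      exact (hp A (Finset.mem_sdiff.1 hA).1).le
  have hβnn : 0 ≤ β := le_trans hRnn hβ
  have hSR : 0 < R + S := by linarith
  have hβS : 0 < β + S := by linarith
  subst hw hwbar hγ
  rw [hT, hAk, Set.mem_Icc]
  constructor
  · rw [sub_le_iff_le_add, div_add_div _ _ (ne_of_gt hSR) (ne_of_gt hβS),
      div_le_div_iff₀ hSpos (mul_pos hSR hβS)]
    nlinarith [mul_nonneg (mul_nonneg hbnn hSpos.le) hβnn,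
      mul_nonneg (mul_nonneg hbnn hSpos.le) hSpos.le,
      mul_nonneg (sub_nonneg.2 hβ) (mul_nonneg hSpos.le hSpos.le),
      mul_nonneg (sub_nonneg.2 hβ) (mul_nonneg hSpos.le hRnn),
      mul_nonneg (sub_nonneg.2 haS) (mul_nonneg hRnn hβS.le)]
  · rw [div_add_div _ _ (ne_of_gt hSpos) (ne_of_gt hβS), div_le_div_iff₀ hSR
      (mul_pos hSpos hβS)]
    nlinarith [mul_nonneg (mul_nonneg hann hRnn) hβS.le,
      mul_nonneg (sub_nonneg.2 (le_trans hbR hβ)) (mul_nonneg hSpos.le hSpos.le),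
      mul_nonneg (sub_nonneg.2 hbR) (mul_nonneg hSpos.le hβnn)]
end

section
/- Let 𝔸 be a finite nonempty set and p : 𝔸 → ℝ with p(A) > 0 for all A ∈ 𝔸. Let 𝔸₍ₖⱼ₎ ⊆ 𝔸 and let Ā ⊆ 𝔸 be nonempty. Define w = (Σ_{A ∈ 𝔸₍ₖⱼ₎} p(A)) / (Σ_{A ∈ 𝔸} p(A)) and w̄ = (Σ_{A ∈ Ā ∩ 𝔸₍ₖⱼ₎} p(A)) / (Σ_{A ∈ Ā} p(A)). Then the exact identity holds: w − w̄ = [ (Σ_{A ∈ 𝔸₍ₖⱼ₎ \ Ā} p(A))·(1 − w̄) − (Σ_{A ∈ (𝔸 \ Ā) \ 𝔸₍ₖⱼ₎} p(A))·w̄ ] / (Σ_{A ∈ 𝔸} p(A)). -/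
/-- The key algebraic identity in the proof of Theorem 1 of the paper:
the difference between the true marginal assignment probability `w` and its
k-best approximation `wbar` expressed via the mass of unenumerated assignments. -/
theorem marginal_assignment_probability_difference_identity
    {α : Type*} [DecidableEq α]
    (𝔸 : Finset α) (h𝔸 : 𝔸.Nonempty)
    (p : α → ℝ) (hp : ∀ A ∈ 𝔸, 0 < p A)
    (Akj : Finset α) (hAkj : Akj ⊆ 𝔸)
    (Abar : Finset α) (hAbar : Abar ⊆ 𝔸) (hAbarNe : Abar.Nonempty)
    (w wbar : ℝ)
    (hw : w = (∑ A ∈ Akj, p A) / (∑ A ∈ 𝔸, p A))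
    (hwbar : wbar = (∑ A ∈ Abar ∩ Akj, p A) / (∑ A ∈ Abar, p A)) :
    w - wbar =
      ((∑ A ∈ Akj \ Abar, p A) * (1 - wbar)
        - (∑ A ∈ (𝔸 \ Abar) \ Akj, p A) * wbar) / (∑ A ∈ 𝔸, p A) := by
  set S := ∑ A ∈ 𝔸, p A with hS
  set B := ∑ A ∈ Abar, p A with hB
  set K := ∑ A ∈ Akj, p A with hK
  set I := ∑ A ∈ Abar ∩ Akj, p A with hI
  have hSpos : 0 < S := Finset.sum_pos hp h𝔸
  have hBpos : 0 < B := Finset.sum_pos (fun A hA => hp A (hAbar hA)) hAbarNe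
  have h1 : ∑ A ∈ Akj \ Abar, p A = K - I := by
    rw [hK, hI, Finset.inter_comm, ← Finset.sum_sdiff_eq_sub (Finset.inter_subset_left)]
    exact Finset.sum_congr (by rw [Finset.sdiff_inter_self_left]) (fun _ _ => rfl)
  have h2 : ∑ A ∈ (𝔸 \ Abar) \ Akj, p A = S - B - (K - I) := by
    have hsub : ∑ A ∈ 𝔸 \ Abar, p A = S - B :=
      Finset.sum_sdiff_eq_sub hAbar
    have hKA : Akj ∩ (𝔸 \ Abar) = Akj \ Abar := by
      ext x
      simp only [Finset.mem_inter, Finset.mem_sdiff]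
      exact ⟨fun ⟨h, h', h''⟩ => ⟨h, h''⟩, fun ⟨h, h'⟩ => ⟨h, hAkj h, h'⟩⟩
    have := Finset.sum_sdiff_eq_sub (s₁ := (𝔸 \ Abar) ∩ Akj) (s₂ := 𝔸 \ Abar)
      (f := p) Finset.inter_subset_left
    rw [Finset.sdiff_inter_self_left] at this
    rw [this, hsub, Finset.inter_comm, hKA, h1]
  rw [hw, hwbar, h1, h2]
  field_simp
  ring
end

section
/- Let 𝔸 be a finite nonempty set and p : 𝔸 → ℝ with p(A) > 0 for all A ∈ 𝔸. Let 𝔸₍ₖⱼ₎ ⊆ 𝔸 and let Ā ⊆ 𝔸 be nonempty. Define w = (Σ_{A ∈ 𝔸₍ₖⱼ₎} p(A)) / (Σ_{A ∈ 𝔸} p(A)) and w̄ = (Σ_{A ∈ Ā ∩ 𝔸₍ₖⱼ₎} p(A)) / (Σ_{A ∈ Ā} p(A)). Then |w − w̄| ≤ ((Σ_{A ∈ 𝔸₍ₖⱼ₎ \ Ā} p(A)) / (Σ_{A ∈ 𝔸} p(A)))·(1 − w̄) + ((Σ_{A ∈ (𝔸 \ Ā) \ 𝔸₍ₖⱼ₎}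 p(A)) / (Σ_{A ∈ 𝔸} p(A)))·w̄. -/
/-- The intermediate triangle-inequality bound from the proof of Theorem 1 of the
paper: the error between the true marginal assignment probability `w` and its
k-best approximation `wbar` is bounded by a convex combination (with weights
`1 - wbar` and `wbar`) of the relative masses of two disjoint subsets of
unenumerated assignments. -/
theorem marginal_assignment_probability_triangle_bound
    {α : Type*} [DecidableEq α]
    (𝔸 : Finset α) (h𝔸 : 𝔸.Nonempty)
    (p : α → ℝ) (hp : ∀ A ∈ 𝔸, 0 < p A)
    (Akj : Finset α) (hAkj : Akj ⊆ 𝔸)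
    (Abar : Finset α) (hAbar : Abar ⊆ 𝔸) (hAbarNe : Abar.Nonempty)
    (w wbar : ℝ)
    (hw : w = (∑ A ∈ Akj, p A) / (∑ A ∈ 𝔸, p A))
    (hwbar : wbar = (∑ A ∈ Abar ∩ Akj, p A) / (∑ A ∈ Abar, p A)) :
    |w - wbar| ≤
      ((∑ A ∈ Akj \ Abar, p A) / (∑ A ∈ 𝔸, p A)) * (1 - wbar)
        + ((∑ A ∈ (𝔸 \ Abar) \ Akj, p A) / (∑ A ∈ 𝔸, p A)) * wbar := by
  set S := ∑ A ∈ 𝔸, p A with hSdef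
  set B := ∑ A ∈ Abar, p A with hBdef
  set a := ∑ A ∈ Abar ∩ Akj, p A with hadef
  set x := ∑ A ∈ Akj \ Abar, p A with hxdef
  set y := ∑ A ∈ (𝔸 \ Abar) \ Akj, p A with hydef
  have hB : 0 < B := Finset.sum_pos (fun i hi => hp i (hAbar hi)) hAbarNe
  have hS : 0 < S := Finset.sum_pos (fun i hi => hp i hi) h𝔸
  have hx : 0 ≤ x := Finset.sum_nonneg fun i hi =>
    (hp i (hAkj (Finset.mem_sdiff.mp hi).1)).le
  have hy : 0 ≤ y := Finset.sum_nonneg fun i hi =>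
    (hp i ((Finset.mem_sdiff.mp ((Finset.mem_sdiff.mp hi).1)).1)).le
  have ha : 0 ≤ a := Finset.sum_nonneg fun i hi =>
    (hp i (hAbar (Finset.mem_inter.mp hi).1)).le
  have haB : a ≤ B := Finset.sum_le_sum_of_subset_of_nonneg
    Finset.inter_subset_left (fun i hi _ => (hp i (hAbar hi)).le)
  have hinter : (𝔸 \ Abar) ∩ Akj = Akj \ Abar := by
    ext i
    simp only [Finset.mem_inter, Finset.mem_sdiff]
    exact ⟨fun ⟨⟨_, hn⟩, hk⟩ => ⟨hk, hn⟩, fun ⟨hk, hn⟩ => ⟨⟨hAkj hk, hn⟩, hk⟩⟩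
  have hSplit : S = B + x + y := by
    rw [hSdef, hBdef, hxdef, hydef, ← Finset.sum_sdiff hAbar,
      ← Finset.sum_inter_add_sum_sdiff (𝔸 \ Abar) Akj, hinter]
    ring
  have hAkjSplit : (∑ A ∈ Akj, p A) = a + x := by
    rw [hadef, hxdef, Finset.inter_comm,
      ← Finset.sum_inter_add_sum_sdiff Akj Abar]
  have hwbar1 : wbar ≤ 1 := by
    rw [hwbar]; exact div_le_one_of_le₀ haB hB.le
  have hwbar0 : 0 ≤ wbar := by
    rw [hwbar]; positivity
  have key : w - wbar = (x / S) * (1 - wbar) - (y / S) * wbar := by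
    have hS' : (0:ℝ) < B + x + y := hSplit ▸ hS
    rw [hw, hwbar, hAkjSplit, hSplit]
    field_simp
    ring
  have hX : 0 ≤ x / S * (1 - wbar) := mul_nonneg (div_nonneg hx hS.le) (by linarith)
  have hY : 0 ≤ y / S * wbar := by positivity
  rw [key]
  calc |x / S * (1 - wbar) - y / S * wbar| ≤ |x / S * (1 - wbar)| + |y / S * wbar| :=
        abs_sub _ _
    _ = x / S * (1 - wbar) + y / S * wbar := by
        rw [abs_of_nonneg hX, abs_of_nonneg hY]
end
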